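/- Let n ≥ 2 and let w_0, ..., w_{n-1} be real arc weights on the directed cycle on n vertices with total weight w = Σ_i w_i nonzero. Let W be the weighted distance matrix (W_{ii} = 0, W_{ij} = Σ_{k=0}^{d-1} w_{(i+k) mod n} where d = (j-i) mod n for i ≠ j). Let L = (1/w)(I - P), where P is the cyclic permutation matrix with P_{i, (i+1) mod n} = 1, and let β be the vector with β_i = w_i / w. Then L W + I = β j^T. -/

import Mathlib

open Matrix
open Fin.NatCast

theorem stmt_8 {n : ℕ} [NeZero n] (hn : 2 ≤ n) (w : Fin n → ℝ)
    (hw : (∑ i, w i) ≠ 0)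
    (W : Matrix (Fin n) (Fin n) ℝ)
    (hW : W = Matrix.of fun i j => ∑ k ∈ Finset.range ((j - i : Fin n) : ℕ), w (i + (k : Fin n)))
    (P : Matrix (Fin n) (Fin n) ℝ)
    (hP : P = Matrix.of fun i j => if j = i + 1 then (1 : ℝ) else 0)
    (L : Matrix (Fin n) (Fin n) ℝ) (hL : L = (∑ i, w i)⁻¹ • (1 - P))
    (β : Fin n → ℝ) (hβ : β = fun i => w i / (∑ i, w i)) :
    L * W + 1 = vecMulVec β (fun _ => 1) := by
  obtain ⟨m, rfl⟩ : ∃ m, n = m + 1 := ⟨n - 1, by omega⟩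
  subst hW hP hL hβ
  set s := ∑ i, w i with hs
  -- sum over a full period
  have hsum : ∀ i : Fin (m + 1), ∑ k ∈ Finset.range (m + 1), w (i + (k : Fin (m+1))) = s := by
    intro i
    rw [← Fin.sum_univ_eq_sum_range (fun k => w (i + (k : Fin (m+1)))) (m+1)]
    simp only [Fin.cast_val_eq_self]
    exact Equiv.sum_comp (Equiv.addLeft i) w
  have key1 : ∀ i j : Fin (m+1), j ≠ i →
      (∑ k ∈ Finset.range ((j - i : Fin (m+1)) : ℕ), w (i + (k : Fin (m+1))))
        = w i + ∑ k ∈ Finset.range ((j - (i+1) : Fin (m+1)) : ℕ), w ((i+1) + (k : Fin (m+1))) := by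
    intro i j hji
    have hne : j - i ≠ 0 := sub_ne_zero.mpr hji
    have hvne : ((j - i : Fin (m+1)) : ℕ) ≠ 0 := by
      intro h
      exact hne (Fin.ext (by simpa using h))
    have hd : ((j - i : Fin (m+1)) : ℕ) = ((j - (i+1) : Fin (m+1)) : ℕ) + 1 := by
      have : j - (i + 1) = (j - i) - 1 := by abel
      rw [this, Fin.coe_sub_one, if_neg hne]
      omega
    rw [hd, Finset.sum_range_succ']
    have : ∀ k : ℕ, i + ((k + 1 : ℕ) : Fin (m+1)) = (i + 1) + (k : Fin (m+1)) := by
      intro k; push_cast; abel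
    simp only [this, Nat.cast_zero, add_zero]
    ring
  have key2 : ∀ i : Fin (m+1),
      (∑ k ∈ Finset.range ((i - (i+1) : Fin (m+1)) : ℕ), w ((i+1) + (k : Fin (m+1)))) = s - w i := by
    intro i
    have h1 : i - (i + 1) = (-1 : Fin (m+1)) := by abel
    have h2 : ((-1 : Fin (m+1)) : ℕ) = m := Fin.coe_neg_one
    rw [h1, h2]
    have := hsum (i + 1)
    rw [Finset.sum_range_succ] at this
    have hlast : (i + 1) + ((m : ℕ) : Fin (m+1)) = i := by
      have : ((m + 1 : ℕ) : Fin (m+1)) = 0 := by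
        simp [Fin.natCast_self]
      push_cast at this ⊢
      rw [add_assoc, add_comm (1 : Fin (m+1)), this, add_zero]
    rw [hlast] at this
    linarith
  ext i j
  simp only [Matrix.add_apply, Matrix.mul_apply, Matrix.smul_apply, Matrix.sub_apply,
    Matrix.one_apply, Matrix.of_apply, vecMulVec_apply, smul_eq_mul]
  rw [show (∑ x, ((∑ i, w i)⁻¹ * ((if i = x then (1:ℝ) else 0) - if x = i + 1 then 1 else 0)) *
        ∑ k ∈ Finset.range ((j - x : Fin (m+1)) : ℕ), w (x + (k : Fin (m+1))))
      = (∑ i, w i)⁻¹ * ((∑ k ∈ Finset.range ((j - i : Fin (m+1)) : ℕ), w (i + (k : Fin (m+1))))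
          - ∑ k ∈ Finset.range ((j - (i+1) : Fin (m+1)) : ℕ), w ((i+1) + (k : Fin (m+1)))) from ?_]
  · by_cases hji : j = i
    · subst hji
      rw [if_pos rfl]
      have h0 : ((j - j : Fin (m+1)) : ℕ) = 0 := by simp
      rw [h0, key2 j]
      simp only [Finset.range_zero, Finset.sum_empty]
      field_simp
      rw [← hs]
      field_simp
      ring
    · rw [if_neg (fun h => hji h.symm), key1 i j hji]
      field_simp
      rw [← hs]
      field_simp
      ring
  · rw [Finset.sum_congr rfl (fun x _ => by ring :
      ∀ x ∈ Finset.univ, ((∑ i, w i)⁻¹ * ((if i = x then (1:ℝ) else 0) - if x = i + 1 then 1 else 0)) *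
        (∑ k ∈ Finset.range ((j - x : Fin (m+1)) : ℕ), w (x + (k : Fin (m+1))))
      = (∑ i, w i)⁻¹ * ((if i = x then (1:ℝ) else 0) * ∑ k ∈ Finset.range ((j - x : Fin (m+1)) : ℕ), w (x + (k : Fin (m+1)))
        - (if x = i + 1 then (1:ℝ) else 0) * ∑ k ∈ Finset.range ((j - x : Fin (m+1)) : ℕ), w (x + (k : Fin (m+1)))))]
    rw [← Finset.mul_sum, Finset.sum_sub_distrib]
    simp [Finset.sum_ite_eq, Finset.sum_ite_eq']
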